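/- Let T be a tree and let 𝔅 be the set of all pairs (B, m) where B belongs to a refining sequence of tree partitions (𝔅_m)_{m≥0} of T with 𝔅₀ = {T}. Fix n ≥ 1 and μ ∈ ℓ¹(T) with ‖μ‖₁ ≤ 1. Call an element B ∈ 𝔅_m heavy if |μ|(B) > m/n. Let 𝔗 be the set of heavy elements and Q the set of terminal elements of the subtree 𝔗 of 𝔅. Then ∑_{B∈Q} |B| < n, where |B| = m is the level of B, and consequently #𝔗 ≤ n. -/

import Mathlib

open scoped ENNReal

lemma disj_tsum_aux {T ι : Type*} (s : ι → Set T)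
    (hd : ∀ i j, i ≠ j → s i ∩ s j = ∅) (f : T → ℝ≥0∞) :
    ∑' i, ∑' x : s i, f x ≤ ∑' t, f t := by
  have h1 : ∑' (p : Σ i, s i), f p.2 = ∑' i, ∑' x : s i, f x :=
    ENNReal.tsum_sigma' _
  rw [← h1]
  refine ENNReal.tsum_comp_le_tsum_of_injective (f := fun p : Σ i, s i => (p.2 : T)) ?_ f
  rintro ⟨i, x, hx⟩ ⟨j, y, hy⟩ h
  dsimp at h
  rcases eq_or_ne i j with rfl | hij
  · subst h; rfl
  · have : x ∈ s i ∩ s j := ⟨hx, h ▸ hy⟩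
    rw [hd i j hij] at this
    exact absurd this (Set.notMem_empty _)

/-- Heavy-domain lemma.  Let `(𝔅_m)_{m≥0}` be a refining sequence of tree partitions of `T`
with `𝔅₀ = {T}`, let `n ≥ 1` and `μ ∈ ℓ¹(T)` with `‖μ‖₁ ≤ 1`.  An element `A ∈ 𝔅_m`
(encoded as the pair `(m, A)`) is heavy if `|μ|(A) > m/n`.  If `𝔗` is the set of heavy
elements and `Q` is the set of terminal elements of the subtree `𝔗`, then
`∑_{B ∈ Q} |B| < n` (where `|B|` is the level) and consequently `𝔗` is finite with
`#𝔗 ≤ n`. -/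
theorem stmt_9 {T : Type*} (B : ℕ → Set (Set T))
    (hB0 : B 0 = {Set.univ})
    (hne : ∀ m, ∀ A ∈ B m, A.Nonempty)
    (hdisj : ∀ m, ∀ A ∈ B m, ∀ A' ∈ B m, A ≠ A' → A ∩ A' = ∅)
    (hcover : ∀ m, ⋃₀ B m = Set.univ)
    (hrefine : ∀ m, ∀ A ∈ B (m + 1), ∃ A' ∈ B m, A ⊆ A')
    (n : ℕ) (hn : 1 ≤ n) (μ : T → ℝ)
    (hsum : Summable fun t => |μ t|) (hμ : ∑' t, |μ t| ≤ 1) :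
    let heavy : ℕ × Set T → Prop := fun p => p.2 ∈ B p.1 ∧ (p.1 : ℝ) / n < ∑' t : p.2, |μ t|
    let 𝔗 : Set (ℕ × Set T) := {p | heavy p}
    let Q : Set (ℕ × Set T) :=
      {p ∈ 𝔗 | ∀ A' ∈ B (p.1 + 1), A' ⊆ p.2 → ¬ heavy (p.1 + 1, A')}
    (∑' p : Q, ((p : ℕ × Set T).1 : ℝ≥0∞)) < n ∧ 𝔗.Finite ∧ Nat.card 𝔗 ≤ n := by
  classical
  intro heavy 𝔗 Q
  have hnR : (0:ℝ) < n := by exact_mod_cast hn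
  set νR : Set T → ℝ := fun A => ∑' t : A, |μ t| with hνR
  set f : T → ℝ≥0∞ := fun t => ENNReal.ofReal |μ t| with hf
  set νE : Set T → ℝ≥0∞ := fun A => ∑' t : A, f t with hνE
  have hνRnonneg : ∀ A, 0 ≤ νR A := fun A => tsum_nonneg (fun _ => abs_nonneg _)
  have hνEeq : ∀ A : Set T, νE A = ENNReal.ofReal (νR A) := by
    intro A
    rw [hνE, hνR]
    exact (ENNReal.ofReal_tsum_of_nonneg (fun _ => abs_nonneg _) (hsum.subtype A)).symm
  have htot : ∑' t, f t ≤ 1 := by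
    rw [hf]
    calc ∑' t, ENNReal.ofReal |μ t| = ENNReal.ofReal (∑' t, |μ t|) :=
          (ENNReal.ofReal_tsum_of_nonneg (fun _ => abs_nonneg _) hsum).symm
      _ ≤ ENNReal.ofReal 1 := ENNReal.ofReal_le_ofReal hμ
      _ = 1 := ENNReal.ofReal_one
  have hmono : ∀ {A C : Set T}, A ⊆ C → νR A ≤ νR C := by
    intro A C h
    exact (hsum.subtype _).tsum_le_tsum_of_inj (Set.inclusion h) (Set.inclusion_injective h)
      (fun _ _ => abs_nonneg _) (fun _ => le_rfl) (hsum.subtype _)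
  have hνR1 : ∀ A, νR A ≤ 1 :=
    fun A => le_trans ((hsum.subtype _).tsum_le_tsum_of_inj (Subtype.val) Subtype.val_injective
      (fun _ _ => abs_nonneg _) (fun _ => le_rfl) hsum) hμ
  have hlev : ∀ p, heavy p → p.1 < n := by
    intro p hp
    have h1 : (p.1 : ℝ) / n < 1 := lt_of_lt_of_le hp.2 (hνR1 p.2)
    have h2 : (p.1 : ℝ) < n := (div_lt_one hnR).mp h1
    exact_mod_cast h2
  have hanc : ∀ m k, ∀ A ∈ B (m + k), ∃ C ∈ B m, A ⊆ C := by
    intro m k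
    induction k with
    | zero => exact fun A hA => ⟨A, hA, subset_rfl⟩
    | succ k ih =>
      intro A hA
      obtain ⟨A', hA', hsub⟩ := hrefine (m + k) A hA
      obtain ⟨C, hC, hsub'⟩ := ih A' hA'
      exact ⟨C, hC, hsub.trans hsub'⟩
  have huniq : ∀ m (C C' A : Set T), C ∈ B m → C' ∈ B m → A.Nonempty →
      A ⊆ C → A ⊆ C' → C = C' := by
    intro m C C' A hC hC' ⟨x, hx⟩ h1 h2
    by_contra hne'
    have : x ∈ C ∩ C' := ⟨h1 hx, h2 hx⟩
    rw [hdisj m C hC C' hC' hne'] at this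
    exact absurd this (Set.notMem_empty _)
  have hheavyanc : ∀ (m m' : ℕ), m ≤ m' → ∀ A C : Set T, heavy (m', A) → C ∈ B m →
      A ⊆ C → heavy (m, C) := by
    intro m m' hmm A C hA hC hsub
    refine ⟨hC, lt_of_le_of_lt ?_ (lt_of_lt_of_le hA.2 (hmono hsub))⟩
    gcongr <;> exact_mod_cast hmm
  have hQdisj0 : ∀ p ∈ Q, ∀ q ∈ Q, p ≠ q → p.1 ≤ q.1 → p.2 ∩ q.2 = ∅ := by
    intro p hp q hq hpq hle
    obtain ⟨hph, hpt⟩ := hp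
    obtain ⟨hqh, hqt⟩ := hq
    rcases eq_or_lt_of_le hle with heq | hlt
    · have hA : p.2 ≠ q.2 := by
        intro h2
        exact hpq (Prod.ext heq h2)
      exact hdisj p.1 p.2 hph.1 q.2 (heq ▸ hqh.1) hA
    · have hq1 : q.1 = p.1 + (q.1 - p.1) := by omega
      obtain ⟨C, hC, hsubC⟩ := hanc p.1 (q.1 - p.1) q.2 (by rw [← hq1]; exact hqh.1)
      rcases eq_or_ne C p.2 with heq | hCp
      · exfalso
        have hq2 : q.1 = (p.1 + 1) + (q.1 - (p.1 + 1)) := by omega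
        obtain ⟨A'', hA'', hsubA''⟩ := hanc (p.1 + 1) (q.1 - (p.1 + 1)) q.2
          (by rw [← hq2]; exact hqh.1)
        obtain ⟨C'', hC'', hsubC''⟩ := hrefine p.1 A'' hA''
        have hCeq : C'' = C :=
          huniq p.1 C'' C q.2 hC'' hC (hne q.1 q.2 hqh.1) (hsubA''.trans hsubC'') hsubC
        have hsub2 : A'' ⊆ p.2 := by rw [← heq, ← hCeq]; exact hsubC''
        exact hpt A'' hA'' hsub2 (hheavyanc (p.1 + 1) q.1 (by omega) q.2 A'' hqh hA'' hsubA'')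
      · have h1 : p.2 ∩ C = ∅ := hdisj p.1 p.2 hph.1 C hC (Ne.symm hCp)
        apply Set.eq_empty_of_subset_empty
        intro x ⟨hx1, hx2⟩
        rw [← h1]
        exact ⟨hx1, hsubC hx2⟩
  have hQdisj : ∀ p ∈ Q, ∀ q ∈ Q, p ≠ q → p.2 ∩ q.2 = ∅ := by
    intro p hp q hq hpq
    rcases le_total p.1 q.1 with h | h
    · exact hQdisj0 p hp q hq hpq h
    · rw [Set.inter_comm]; exact hQdisj0 q hq p hp (Ne.symm hpq) h
  have hSfin : ∀ m, {A : Set T | heavy (m, A)}.Finite := by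
    intro m
    rcases Nat.eq_zero_or_pos m with rfl | hm
    · apply Set.Finite.subset (Set.finite_singleton Set.univ)
      intro A hA
      have := hA.1
      rw [hB0] at this
      exact this
    · set S := {A : Set T | heavy (m, A)} with hS
      have hd : ∀ (x y : ↥S), x ≠ y → (x : Set T) ∩ (y : Set T) = ∅ := by
        intro x y hxy
        exact hdisj m x x.2.1 y y.2.1 (fun h => hxy (Subtype.ext h))
      have hsum1 : ∑' x : ↥S, νE (x : Set T) ≤ 1 :=
        le_trans (disj_tsum_aux (fun x : ↥S => (x : Set T)) hd f) htot
      have hfin : {x : ↥S | ENNReal.ofReal ((1:ℝ)/n) ≤ νE (x : Set T)}.Finite := by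
        apply ENNReal.finite_const_le_of_tsum_ne_top
          (ne_top_of_le_ne_top ENNReal.one_ne_top hsum1)
        simp only [ne_eq, ENNReal.ofReal_eq_zero, not_le]
        positivity
      have huniv : {x : ↥S | ENNReal.ofReal ((1:ℝ)/n) ≤ νE (x : Set T)} = Set.univ := by
        ext x
        simp only [Set.mem_setOf_eq, Set.mem_univ, iff_true]
        rw [hνEeq]
        apply ENNReal.ofReal_le_ofReal
        calc (1:ℝ)/n ≤ (m:ℝ)/n := by gcongr <;> exact_mod_cast hm
          _ ≤ νR (x : Set T) := le_of_lt x.2.2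
      rw [huniv] at hfin
      exact Set.finite_coe_iff.mp (Set.finite_univ_iff.mp hfin)
  have h𝔗fin : 𝔗.Finite := by
    apply Set.Finite.subset (Set.Finite.biUnion (Finset.range n).finite_toSet
      (fun m _ => ((hSfin m).image (Prod.mk m))))
    intro p hp
    simp only [Set.mem_iUnion, Finset.coe_range, Set.mem_Iio, Set.mem_image,
      Set.mem_setOf_eq, exists_prop]
    exact ⟨p.1, hlev p hp, p.2, hp, rfl⟩
  have hQ𝔗 : Q ⊆ 𝔗 := fun p hp => hp.1
  have hQfin : Q.Finite := h𝔗fin.subset hQ𝔗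
  have hdesc : ∀ p ∈ 𝔗, ∃ q ∈ Q, q.2 ⊆ p.2 ∧ p.1 ≤ q.1 := by
    have key : ∀ k, ∀ p ∈ 𝔗, n - p.1 ≤ k → ∃ q ∈ Q, q.2 ⊆ p.2 ∧ p.1 ≤ q.1 := by
      intro k
      induction k with
      | zero => intro p hp h0; exact absurd (hlev p hp) (by omega)
      | succ k ih =>
        intro p hp hk
        by_cases hq : p ∈ Q
        · exact ⟨p, hq, subset_rfl, le_rfl⟩
        · have : ¬ ∀ A' ∈ B (p.1 + 1), A' ⊆ p.2 → ¬ heavy (p.1 + 1, A') := by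
            intro h; exact hq ⟨hp, h⟩
          push_neg at this
          obtain ⟨A', hA', hsub, hheavy'⟩ := this
          have hp' : ((p.1 + 1, A') : ℕ × Set T) ∈ 𝔗 := hheavy'
          obtain ⟨q, hqQ, hq2, hq1⟩ := ih (p.1 + 1, A') hp' (by
            have := hlev p hp; simp only; omega)
          exact ⟨q, hqQ, hq2.trans hsub, by simp only at hq1; omega⟩
    exact fun p hp => key n p hp (Nat.sub_le n p.1)
  set QF := hQfin.toFinset with hQF
  have hQFmem : ∀ p, p ∈ QF ↔ p ∈ Q := fun p => hQfin.mem_toFinset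
  have e0 : ∀ (g : ℕ × Set T → ℝ≥0∞), ∑' x : ↥Q, g ↑x = ∑ p ∈ QF, g p := by
    intro g
    rw [← Finset.tsum_subtype QF g]
    exact (Equiv.subtypeEquivRight (fun x => (hQFmem x).symm)).tsum_eq
      (fun x : ↥QF => g ↑x)
  have hQnat : ∑ p ∈ QF, p.1 < n := by
    rcases QF.eq_empty_or_nonempty with h | h
    · rw [h, Finset.sum_empty]; omega
    · have h1 : ∑ p ∈ QF, ((p.1:ℝ)/n) < ∑ p ∈ QF, νR p.2 :=
        Finset.sum_lt_sum_of_nonempty h (fun p hp => ((hQFmem p).mp hp).1.2)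
      have hd : ∀ (x y : ↥Q), x ≠ y → (x : ℕ × Set T).2 ∩ (y : ℕ × Set T).2 = ∅ := by
        intro x y hxy
        exact hQdisj x x.2 y y.2 (fun hc => hxy (Subtype.ext hc))
      have h2 : ∑' x : ↥Q, νE (x : ℕ × Set T).2 ≤ 1 :=
        le_trans (disj_tsum_aux (fun x : ↥Q => (x : ℕ × Set T).2) hd f) htot
      have h3 : ∑ p ∈ QF, νE p.2 ≤ 1 := by
        rw [← e0 (fun p => νE p.2)]; exact h2
      have h4 : ∑ p ∈ QF, νR p.2 ≤ 1 := by
        have h5 : ∀ p ∈ QF, νE p.2 ≠ ⊤ := by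
          intro p _
          rw [hνEeq]
          exact ENNReal.ofReal_ne_top
        have h6 : (∑ p ∈ QF, νE p.2).toReal = ∑ p ∈ QF, νR p.2 := by
          rw [ENNReal.toReal_sum h5]
          refine Finset.sum_congr rfl (fun p _ => ?_)
          rw [hνEeq, ENNReal.toReal_ofReal (hνRnonneg _)]
        calc ∑ p ∈ QF, νR p.2 = (∑ p ∈ QF, νE p.2).toReal := h6.symm
          _ ≤ (1:ℝ≥0∞).toReal := ENNReal.toReal_mono ENNReal.one_ne_top h3
          _ = 1 := by simp
      have h7 : (∑ p ∈ QF, (p.1:ℝ)) / n < 1 := by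
        rw [Finset.sum_div]
        exact lt_of_lt_of_le h1 h4
      have h8 : (∑ p ∈ QF, (p.1:ℝ)) < n := (div_lt_one hnR).mp h7
      have h9 : ((∑ p ∈ QF, p.1 : ℕ) : ℝ) < n := by push_cast; exact h8
      exact_mod_cast h9
  refine ⟨?_, h𝔗fin, ?_⟩
  · rw [e0 (fun p => (p.1 : ℝ≥0∞))]
    have : ∑ p ∈ QF, ((p.1 : ℕ) : ℝ≥0∞) = ((∑ p ∈ QF, p.1 : ℕ) : ℝ≥0∞) := by
      push_cast; rfl
    rw [this]
    exact_mod_cast hQnat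
  · have hdesc' : ∀ p : ℕ × Set T, ∃ q, p ∈ 𝔗 → q ∈ Q ∧ q.2 ⊆ p.2 ∧ p.1 ≤ q.1 := by
      intro p
      by_cases hp : p ∈ 𝔗
      · obtain ⟨q, h1, h2, h3⟩ := hdesc p hp
        exact ⟨q, fun _ => ⟨h1, h2, h3⟩⟩
      · exact ⟨(0, Set.univ), fun h => absurd h hp⟩
    choose φ hφ using hdesc'
    set TF := h𝔗fin.toFinset with hTF
    have hTFmem : ∀ p, p ∈ TF ↔ p ∈ 𝔗 := fun p => h𝔗fin.mem_toFinset
    have hcard : Nat.card 𝔗 = TF.card := by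
      rw [Nat.card_coe_set_eq, Set.ncard_eq_toFinset_card 𝔗 h𝔗fin]
    set S2 := QF.biUnion (fun q => (Finset.Icc 1 q.1).image (fun m => (q, m))) with hS2
    have hS2card : S2.card ≤ ∑ q ∈ QF, q.1 := by
      refine le_trans Finset.card_biUnion_le (Finset.sum_le_sum fun q _ => ?_)
      refine le_trans Finset.card_image_le ?_
      rw [Nat.card_Icc]
      omega
    have hfilt : (TF.filter (fun p => p.1 ≠ 0)).card ≤ S2.card := by
      apply Finset.card_le_card_of_injOn (fun p => (φ p, p.1))
      · intro p hp
        rw [Finset.mem_coe, Finset.mem_filter, hTFmem] at hp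
        obtain ⟨hp𝔗, hp0⟩ := hp
        obtain ⟨hφQ, hφsub, hφle⟩ := hφ p hp𝔗
        rw [hS2, Finset.mem_coe, Finset.mem_biUnion]
        exact ⟨φ p, (hQFmem _).mpr hφQ, Finset.mem_image.mpr
          ⟨p.1, Finset.mem_Icc.mpr ⟨by omega, hφle⟩, rfl⟩⟩
      · intro p hp p' hp' hpp
        simp only [Finset.coe_filter, Set.mem_setOf_eq, hTFmem] at hp hp'
        obtain ⟨hp𝔗, _⟩ := hp
        obtain ⟨hp'𝔗, _⟩ := hp'
        have heq1 : φ p = φ p' := congrArg Prod.fst hpp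
        have heq2 : p.1 = p'.1 := congrArg Prod.snd hpp
        obtain ⟨hφQ, hφsub, _⟩ := hφ p hp𝔗
        obtain ⟨hφQ', hφsub', _⟩ := hφ p' hp'𝔗
        have hnonempty : (φ p).2.Nonempty := hne (φ p).1 (φ p).2 hφQ.1.1
        have hB' : p'.2 ∈ B p.1 := by rw [heq2]; exact hp'𝔗.1
        have h2 : p.2 = p'.2 :=
          huniq p.1 p.2 p'.2 (φ p).2 hp𝔗.1 hB' hnonempty hφsub (heq1 ▸ hφsub')
        exact Prod.ext heq2 h2
    have hsplit : (TF.filter (fun p => ¬ p.1 ≠ 0)).card ≤ 1 := by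
      refine le_trans (Finset.card_le_card (t := {((0 : ℕ), Set.univ (α := T))}) ?_) ?_
      · intro p hp
        rw [Finset.mem_filter, hTFmem] at hp
        obtain ⟨hp𝔗, hp0⟩ := hp
        have h0 : p.1 = 0 := by omega
        have : p.2 ∈ B 0 := h0 ▸ hp𝔗.1
        rw [hB0, Set.mem_singleton_iff] at this
        rw [Finset.mem_singleton]
        exact Prod.ext h0 this
      · simp
    have htotal := Finset.card_filter_add_card_filter_not
      (s := TF) (p := fun p => p.1 ≠ 0)
    rw [hcard]
    omega
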